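/- Let G be the stellated graph of a tree T with at least two vertices. Then the median eigenvalues of G satisfy −1 ≤ λ_L(G) < 0 < λ_H(G) ≤ 1, where λ_H and λ_L are the ⌊(n+1)/2⌋-th and ⌈(n+1)/2⌉-th largest adjacency eigenvalues of G and n = |V(G)|. -/

import Mathlib

set_option linter.unusedSectionVars false
set_option maxHeartbeats 1000000

open scoped Classical
open Matrix Finset Module SimpleGraph

/-- The stellated graph (= line graph of the subdivision) of `G`: vertices are the darts
of `G`; two darts are adjacent iff they share their initial vertex or are the two darts
of a common edge of `G`. -/
def stellated {V : Type*} (G : SimpleGraph V) : SimpleGraph G.Dart where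
  Adj d₁ d₂ := d₁ ≠ d₂ ∧ (d₁.fst = d₂.fst ∨ d₂ = d₁.symm)
  symm := by
    constructor
    rintro d₁ d₂ ⟨hne, h | h⟩
    · exact ⟨hne.symm, Or.inl h.symm⟩
    · refine ⟨hne.symm, Or.inr ?_⟩
      subst h; simp
  loopless := by constructor; rintro d ⟨hne, -⟩; exact hne rfl

namespace StellAux


variable {ι : Type*} [Fintype ι] [DecidableEq ι]

lemma dot_eq_inner (x y : EuclideanSpace ℝ ι) :
    (inner ℝ x y : ℝ) = dotProduct x y := by
  simp [PiLp.inner_apply, RCLike.inner_apply, dotProduct, mul_comm]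

variable {A : Matrix ι ι ℝ} (hA : A.IsHermitian)

lemma repr_eq_zero_of_mem_span (Q : Finset ι) {x : EuclideanSpace ℝ ι}
    (hx : x ∈ Submodule.span ℝ (⇑hA.eigenvectorBasis '' ↑Q)) {i : ι} (hi : i ∉ Q) :
    hA.eigenvectorBasis.repr x i = 0 := by
  induction hx using Submodule.span_induction with
  | mem y hy =>
      obtain ⟨j, hj, rfl⟩ := hy
      rw [OrthonormalBasis.repr_self]
      have hij : i ≠ j := fun h => hi (h ▸ hj)
      simp [EuclideanSpace.single_apply, hij]
  | zero => simp
  | add y z _ _ hy hz => simp [hy, hz]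
  | smul a y _ hy => simp [hy]

lemma dot_self_of_mem_span (Q : Finset ι) {x : EuclideanSpace ℝ ι}
    (hx : x ∈ Submodule.span ℝ (⇑hA.eigenvectorBasis '' ↑Q)) :
    dotProduct (x : EuclideanSpace ℝ ι) x = ∑ i ∈ Q, (hA.eigenvectorBasis.repr x i)^2 := by
  rw [← dot_eq_inner, ← hA.eigenvectorBasis.repr.inner_map_map x x, PiLp.inner_apply,
    ← Finset.sum_subset (Finset.subset_univ Q)]
  · exact Finset.sum_congr rfl fun i _ => by simp [RCLike.inner_apply, sq]
  · intro i _ hi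
    rw [repr_eq_zero_of_mem_span hA Q hx hi]
    simp

lemma dot_mulVec_of_mem_span (Q : Finset ι) {x : EuclideanSpace ℝ ι}
    (hx : x ∈ Submodule.span ℝ (⇑hA.eigenvectorBasis '' ↑Q)) :
    dotProduct (x : EuclideanSpace ℝ ι) (A.mulVec x) =
      ∑ i ∈ Q, hA.eigenvalues i * (hA.eigenvectorBasis.repr x i)^2 := by
  have hsymm : Aᵀ = A := by
    have := hA.eq
    rwa [Matrix.conjTranspose_eq_transpose_of_trivial] at this
  have key : ∀ i : ι, dotProduct (hA.eigenvectorBasis i : EuclideanSpace ℝ ι) (A.mulVec x)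
      = hA.eigenvalues i * hA.eigenvectorBasis.repr x i := by
    intro i
    have hmv : A.mulVec (hA.eigenvectorBasis i : EuclideanSpace ℝ ι)
        = hA.eigenvalues i • (hA.eigenvectorBasis i : EuclideanSpace ℝ ι) :=
      hA.mulVec_eigenvectorBasis i
    rw [Matrix.dotProduct_mulVec, ← Matrix.mulVec_transpose, hsymm, hmv,
      ← dot_eq_inner, WithLp.toLp_smul, WithLp.toLp_ofLp, real_inner_smul_left, hA.eigenvectorBasis.repr_apply_apply]
  have hxe : x = ∑ i, hA.eigenvectorBasis.repr x i • hA.eigenvectorBasis i :=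
    (hA.eigenvectorBasis.sum_repr x).symm
  have main : ∀ y : EuclideanSpace ℝ ι, (inner ℝ x y : ℝ)
      = ∑ i, hA.eigenvectorBasis.repr x i * (inner ℝ (hA.eigenvectorBasis i) y : ℝ) := by
    intro y
    conv_lhs => rw [hxe]
    rw [sum_inner]
    exact Finset.sum_congr rfl fun i _ => real_inner_smul_left _ _ _
  calc dotProduct (x : EuclideanSpace ℝ ι) (A.mulVec x)
      = (inner ℝ x (WithLp.toLp 2 (A.mulVec x)) : ℝ) := (dot_eq_inner x (WithLp.toLp 2 (A.mulVec x))).symm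
    _ = ∑ i, hA.eigenvectorBasis.repr x i * (hA.eigenvalues i * hA.eigenvectorBasis.repr x i) := by
        rw [main]
        refine Finset.sum_congr rfl fun i _ => ?_
        rw [dot_eq_inner, key i]
    _ = ∑ i ∈ Q, hA.eigenvalues i * (hA.eigenvectorBasis.repr x i)^2 := by
        rw [← Finset.sum_subset (Finset.subset_univ Q)]
        · exact Finset.sum_congr rfl fun i _ => by ring
        · intro i _ hi
          rw [repr_eq_zero_of_mem_span hA Q hx hi]
          simp

lemma eq_zero_of_repr_eq_zero (Q : Finset ι) {x : EuclideanSpace ℝ ι}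
    (hx : x ∈ Submodule.span ℝ (⇑hA.eigenvectorBasis '' ↑Q))
    (h : ∀ i ∈ Q, hA.eigenvectorBasis.repr x i = 0) : x = 0 := by
  have : hA.eigenvectorBasis.repr x = 0 := by
    ext i
    by_cases hi : i ∈ Q
    · simpa using h i hi
    · simpa using repr_eq_zero_of_mem_span hA Q hx hi
  simpa using congrArg hA.eigenvectorBasis.repr.symm this

lemma finrank_span_eigen (Q : Finset ι) :
    finrank ℝ (Submodule.span ℝ (⇑hA.eigenvectorBasis '' ↑Q)) = Q.card := by
  have li : LinearIndependent ℝ (fun i : (↑Q : Set ι) => hA.eigenvectorBasis i) :=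
    (hA.eigenvectorBasis.orthonormal.linearIndependent).comp _ Subtype.val_injective
  rw [Set.image_eq_range, finrank_span_eq_card li]
  simp

lemma finrank_add_le_of_disj {E : Type*} [NormedAddCommGroup E] [InnerProductSpace ℝ E]
    [FiniteDimensional ℝ E] (S₁ S₂ : Submodule ℝ E)
    (h : ∀ x, x ∈ S₁ → x ∈ S₂ → x = 0) :
    finrank ℝ S₁ + finrank ℝ S₂ ≤ finrank ℝ E := by
  have hinf : S₁ ⊓ S₂ = ⊥ := by
    rw [eq_bot_iff]
    intro x hx
    simp only [Submodule.mem_inf] at hx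
    simpa using h x hx.1 hx.2
  have h2 := Submodule.finrank_sup_add_finrank_inf_eq S₁ S₂
  rw [hinf] at h2
  simp only [finrank_bot, add_zero] at h2
  rw [← h2]
  exact Submodule.finrank_le _


lemma le_card_gt {c : ℝ} (S : Submodule ℝ (EuclideanSpace ℝ ι))
    (hS : ∀ x ∈ S, x ≠ 0 → c * dotProduct x x < dotProduct x (A.mulVec x)) :
    finrank ℝ S ≤ (univ.filter fun i => c < hA.eigenvalues i).card := by
  classical
  set Q : Finset ι := univ.filter (fun i => ¬ c < hA.eigenvalues i) with hQdef
  have hdisj : ∀ x, x ∈ S → x ∈ Submodule.span ℝ (⇑hA.eigenvectorBasis '' ↑Q) → x = 0 := by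
    intro x hxS hxQ
    by_contra hx0
    have h1 := hS x hxS hx0
    have h2 : dotProduct (x : EuclideanSpace ℝ ι) (A.mulVec x)
        ≤ c * dotProduct (x : EuclideanSpace ℝ ι) x := by
      rw [dot_mulVec_of_mem_span hA Q hxQ, dot_self_of_mem_span hA Q hxQ, Finset.mul_sum]
      refine Finset.sum_le_sum fun i hi => ?_
      have hle : hA.eigenvalues i ≤ c := le_of_not_gt (Finset.mem_filter.mp hi).2
      nlinarith [sq_nonneg (hA.eigenvectorBasis.repr x i)]
    linarith
  have hle := finrank_add_le_of_disj S _ hdisj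
  rw [finrank_span_eigen hA Q, finrank_euclideanSpace] at hle
  have hcard : (univ.filter fun i => c < hA.eigenvalues i).card + Q.card = Fintype.card ι := by
    rw [hQdef]
    simpa using Finset.card_filter_add_card_filter_not
      (s := (univ : Finset ι)) (p := fun i => c < hA.eigenvalues i)
  omega

lemma le_card_lt {c : ℝ} (S : Submodule ℝ (EuclideanSpace ℝ ι))
    (hS : ∀ x ∈ S, x ≠ 0 → dotProduct x (A.mulVec x) < c * dotProduct x x) :
    finrank ℝ S ≤ (univ.filter fun i => hA.eigenvalues i < c).card := by
  classical
  set Q : Finset ι := univ.filter (fun i => ¬ hA.eigenvalues i < c) with hQdef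
  have hdisj : ∀ x, x ∈ S → x ∈ Submodule.span ℝ (⇑hA.eigenvectorBasis '' ↑Q) → x = 0 := by
    intro x hxS hxQ
    by_contra hx0
    have h1 := hS x hxS hx0
    have h2 : c * dotProduct (x : EuclideanSpace ℝ ι) x
        ≤ dotProduct (x : EuclideanSpace ℝ ι) (A.mulVec x) := by
      rw [dot_mulVec_of_mem_span hA Q hxQ, dot_self_of_mem_span hA Q hxQ, Finset.mul_sum]
      refine Finset.sum_le_sum fun i hi => ?_
      have hle : c ≤ hA.eigenvalues i := le_of_not_gt (Finset.mem_filter.mp hi).2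
      nlinarith [sq_nonneg (hA.eigenvectorBasis.repr x i)]
    linarith
  have hle := finrank_add_le_of_disj S _ hdisj
  rw [finrank_span_eigen hA Q, finrank_euclideanSpace] at hle
  have hcard : (univ.filter fun i => hA.eigenvalues i < c).card + Q.card = Fintype.card ι := by
    rw [hQdef]
    simpa using Finset.card_filter_add_card_filter_not
      (s := (univ : Finset ι)) (p := fun i => hA.eigenvalues i < c)
  omega

lemma card_gt_add_le {c : ℝ} (S : Submodule ℝ (EuclideanSpace ℝ ι))
    (hS : ∀ x ∈ S, dotProduct x (A.mulVec x) ≤ c * dotProduct x x) :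
    (univ.filter fun i => c < hA.eigenvalues i).card + finrank ℝ S ≤ Fintype.card ι := by
  classical
  set Q : Finset ι := univ.filter (fun i => c < hA.eigenvalues i) with hQdef
  have hdisj : ∀ x, x ∈ Submodule.span ℝ (⇑hA.eigenvectorBasis '' ↑Q) → x ∈ S → x = 0 := by
    intro x hxQ hxS
    by_contra hx0
    have h1 := hS x hxS
    have hex : ∃ i ∈ Q, hA.eigenvectorBasis.repr x i ≠ 0 := by
      by_contra hno
      push_neg at hno
      exact hx0 (eq_zero_of_repr_eq_zero hA Q hxQ hno)
    obtain ⟨i₀, hi₀Q, hi₀⟩ := hex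
    have h2 : c * dotProduct (x : EuclideanSpace ℝ ι) x
        < dotProduct (x : EuclideanSpace ℝ ι) (A.mulVec x) := by
      rw [dot_mulVec_of_mem_span hA Q hxQ, dot_self_of_mem_span hA Q hxQ, Finset.mul_sum]
      refine Finset.sum_lt_sum (fun i hi => ?_) ⟨i₀, hi₀Q, ?_⟩
      · have : c < hA.eigenvalues i := (Finset.mem_filter.mp hi).2
        nlinarith [sq_nonneg (hA.eigenvectorBasis.repr x i)]
      · have : c < hA.eigenvalues i₀ := (Finset.mem_filter.mp hi₀Q).2
        have hsq : 0 < (hA.eigenvectorBasis.repr x i₀)^2 := by positivity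
        nlinarith
    linarith
  have hle := finrank_add_le_of_disj _ S hdisj
  rw [finrank_span_eigen hA Q, finrank_euclideanSpace] at hle
  exact hle

lemma card_lt_add_le {c : ℝ} (S : Submodule ℝ (EuclideanSpace ℝ ι))
    (hS : ∀ x ∈ S, c * dotProduct x x ≤ dotProduct x (A.mulVec x)) :
    (univ.filter fun i => hA.eigenvalues i < c).card + finrank ℝ S ≤ Fintype.card ι := by
  classical
  set Q : Finset ι := univ.filter (fun i => hA.eigenvalues i < c) with hQdef
  have hdisj : ∀ x, x ∈ Submodule.span ℝ (⇑hA.eigenvectorBasis '' ↑Q) → x ∈ S → x = 0 := by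
    intro x hxQ hxS
    by_contra hx0
    have h1 := hS x hxS
    have hex : ∃ i ∈ Q, hA.eigenvectorBasis.repr x i ≠ 0 := by
      by_contra hno
      push_neg at hno
      exact hx0 (eq_zero_of_repr_eq_zero hA Q hxQ hno)
    obtain ⟨i₀, hi₀Q, hi₀⟩ := hex
    have h2 : dotProduct (x : EuclideanSpace ℝ ι) (A.mulVec x)
        < c * dotProduct (x : EuclideanSpace ℝ ι) x := by
      rw [dot_mulVec_of_mem_span hA Q hxQ, dot_self_of_mem_span hA Q hxQ, Finset.mul_sum]
      refine Finset.sum_lt_sum (fun i hi => ?_) ⟨i₀, hi₀Q, ?_⟩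
      · have : hA.eigenvalues i < c := (Finset.mem_filter.mp hi).2
        nlinarith [sq_nonneg (hA.eigenvectorBasis.repr x i)]
      · have : hA.eigenvalues i₀ < c := (Finset.mem_filter.mp hi₀Q).2
        have hsq : 0 < (hA.eigenvectorBasis.repr x i₀)^2 := by positivity
        nlinarith
    linarith
  have hle := finrank_add_le_of_disj _ S hdisj
  rw [finrank_span_eigen hA Q, finrank_euclideanSpace] at hle
  exact hle



variable {n : ℕ} {T : SimpleGraph (Fin n)} (hT : T.IsTree) (r : Fin n)

noncomputable def pathTo (v : Fin n) : T.Walk v r :=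
  (hT.existsUnique_path v r).exists.choose

lemma pathTo_isPath (v : Fin n) : (pathTo hT r v).IsPath :=
  (hT.existsUnique_path v r).exists.choose_spec

lemma pathTo_unique {v : Fin n} (p : T.Walk v r) (hp : p.IsPath) : p = pathTo hT r v :=
  (hT.existsUnique_path v r).unique hp (pathTo_isPath hT r v)

noncomputable def par (v : Fin n) : Fin n := (pathTo hT r v).getVert 1

noncomputable def depth (v : Fin n) : ℕ := (pathTo hT r v).length

lemma pathTo_self : pathTo hT r r = Walk.nil :=
  (pathTo_unique hT r Walk.nil Walk.IsPath.nil).symm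

@[simp] lemma depth_self : depth hT r r = 0 := by
  rw [depth, pathTo_self]; rfl

@[simp] lemma par_self : par hT r r = r := by
  rw [par, pathTo_self]; rfl

lemma depth_pos {v : Fin n} (hv : v ≠ r) : 0 < depth hT r v := by
  rcases Nat.eq_zero_or_pos (depth hT r v) with h | h
  · exact absurd (Walk.eq_of_length_eq_zero h) hv
  · exact h

lemma adj_par {v : Fin n} (hv : v ≠ r) : T.Adj v (par hT r v) := by
  have h := Walk.adj_getVert_succ (pathTo hT r v) (i := 0) (depth_pos hT r hv)
  simpa [Walk.getVert_zero, par] using h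

lemma pathTo_cons {v : Fin n} (hv : v ≠ r) :
    ∃ (h : T.Adj v (par hT r v)),
      pathTo hT r v = Walk.cons h (pathTo hT r (par hT r v)) := by
  rcases hp : pathTo hT r v with _ | ⟨hadj, q⟩
  · exact absurd rfl hv
  · rename_i w
    have hw : w = par hT r v := by
      rw [par, hp, Walk.getVert_cons_succ, Walk.getVert_zero]
    subst hw
    have hq : q.IsPath := by
      have := pathTo_isPath hT r v
      rw [hp, Walk.cons_isPath_iff] at this
      exact this.1
    exact ⟨hadj, congrArg _ (pathTo_unique hT r q hq)⟩

lemma depth_par {v : Fin n} (hv : v ≠ r) :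
    depth hT r (par hT r v) + 1 = depth hT r v := by
  obtain ⟨h, hcons⟩ := pathTo_cons hT r hv
  rw [depth, depth, hcons, Walk.length_cons]

lemma par_of_adj {v w : Fin n} (hadj : T.Adj v w) (hw : w ≠ par hT r v) :
    par hT r w = v ∧ depth hT r w = depth hT r v + 1 := by
  by_cases hmem : w ∈ (pathTo hT r v).support
  · exfalso
    have htp : ((pathTo hT r v).takeUntil w hmem).IsPath :=
      (pathTo_isPath hT r v).takeUntil hmem
    have he : s(w, v) ∈ ((pathTo hT r v).takeUntil w hmem).edges → False := by
      intro he
      rcases htt : (pathTo hT r v).takeUntil w hmem with _ | ⟨h1, t1⟩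
      · exact hadj.ne rfl
      · rename_i x
        rw [htt] at he htp
        rw [Walk.edges_cons, List.mem_cons] at he
        rcases he with he | he
        · have hx : x = w := by
            rw [Sym2.eq_iff] at he
            rcases he with ⟨h1', _⟩ | ⟨h1', _⟩
            · exact absurd h1'.symm hadj.ne
            · exact h1'.symm
          subst hx
          have ht1 : t1 = Walk.nil := by
            rw [Walk.cons_isPath_iff] at htp
            exact Walk.isPath_iff_eq_nil.mp htp.1
          subst ht1
          have hspec := Walk.take_spec (pathTo hT r v) hmem
          rw [htt] at hspec
          apply hw
          rw [par, ← hspec, Walk.cons_append, Walk.nil_append,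
            Walk.getVert_cons_succ, Walk.getVert_zero]
        · have hv1 : v ∈ t1.support := Walk.snd_mem_support_of_mem_edges t1 he
          rw [Walk.cons_isPath_iff] at htp
          exact htp.2 hv1
    exact hT.IsAcyclic _ ((Walk.cons_isCycle_iff _ hadj.symm).mpr ⟨htp, he⟩) 
  · have hpath : (Walk.cons hadj.symm (pathTo hT r v)).IsPath :=
      (Walk.cons_isPath_iff _ _).mpr ⟨pathTo_isPath hT r v, hmem⟩
    have huniq := pathTo_unique hT r _ hpath
    constructor
    · rw [par, ← huniq, Walk.getVert_cons_succ, Walk.getVert_zero]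
    · rw [depth, depth, ← huniq, Walk.length_cons]



variable {n : ℕ} {T : SimpleGraph (Fin n)}

/-- adjacency matrix of the stellated graph -/
noncomputable def stMat (T : SimpleGraph (Fin n)) : Matrix T.Dart T.Dart ℝ :=
  Matrix.of fun d e => if (stellated T).Adj d e then (1 : ℝ) else 0

lemma stellated_adj (d e : T.Dart) :
    (stellated T).Adj d e ↔ d ≠ e ∧ (d.fst = e.fst ∨ e = d.symm) := Iff.rfl

/-- sum of x over darts with initial vertex v -/
noncomputable def svx (x : T.Dart → ℝ) (v : Fin n) : ℝ :=
  ∑ d : T.Dart, if d.fst = v then x d else 0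

lemma svx_add (x y : T.Dart → ℝ) (v : Fin n) :
    svx (x + y) v = svx x v + svx y v := by
  rw [svx, svx, svx, ← Finset.sum_add_distrib]
  refine Finset.sum_congr rfl fun d _ => ?_
  by_cases h : d.fst = v <;> simp [h]

lemma svx_smul (c : ℝ) (x : T.Dart → ℝ) (v : Fin n) :
    svx (c • x) v = c * svx x v := by
  rw [svx, svx, Finset.mul_sum]
  refine Finset.sum_congr rfl fun d _ => ?_
  by_cases h : d.fst = v <;> simp [h]

lemma stMat_mulVec (x : T.Dart → ℝ) (d : T.Dart) :
    (stMat T).mulVec x d = svx x d.fst - x d + x d.symm := by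
  have hterm : ∀ e : T.Dart, (if (stellated T).Adj d e then (1:ℝ) else 0) * x e
      = (if e.fst = d.fst then x e else 0) - (if e = d then x e else 0)
        + (if e = d.symm then x e else 0) := by
    intro e
    by_cases hed : e = d
    · subst hed
      have h1 : ¬ (stellated T).Adj e e := (stellated T).irrefl
      have h2 : e ≠ e.symm := (SimpleGraph.Dart.symm_ne e).symm
      simp [h1, h2]
    · by_cases hes : e = d.symm
      · subst hes
        have h1 : (stellated T).Adj d d.symm := ⟨(SimpleGraph.Dart.symm_ne d).symm, Or.inr rfl⟩
        have h2 : ¬ (d.symm.fst = d.fst) := fun h => SimpleGraph.Dart.fst_ne_snd d h.symm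
        simp [h1, h2, hed]
      · have hda : d ≠ e := fun h => hed h.symm
        have hiff : (stellated T).Adj d e ↔ d.fst = e.fst := by
          rw [stellated_adj]
          simp [hes, hda]
        by_cases hf : e.fst = d.fst
        · simp [hiff, hf.symm, hed, hes]
        · have hno : ¬ (stellated T).Adj d e := by
            rw [hiff]; exact fun h => hf h.symm
          simp [hno, hf, hed, hes]
  rw [Matrix.mulVec]
  show (∑ e, (if (stellated T).Adj d e then (1:ℝ) else 0) * x e) = _
  rw [Finset.sum_congr rfl fun e _ => hterm e]
  rw [Finset.sum_add_distrib, Finset.sum_sub_distrib]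
  have h1 : (∑ e : T.Dart, if e = d then x e else 0) = x d := by
    rw [Finset.sum_ite_eq' univ d x]; simp
  have h2 : (∑ e : T.Dart, if e = d.symm then x e else 0) = x d.symm := by
    rw [Finset.sum_ite_eq' univ d.symm x]; simp
  rw [h1, h2]
  rfl

lemma sum_mul_svx (g : Fin n → ℝ) (x : T.Dart → ℝ) :
    ∑ v, g v * svx x v = ∑ d : T.Dart, g d.fst * x d := by
  simp only [svx, Finset.mul_sum]
  rw [Finset.sum_comm]
  refine Finset.sum_congr rfl fun d _ => ?_
  have : ∀ v, (g v * if d.fst = v then x d else 0) = if d.fst = v then g v * x d else 0 := by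
    intro v; by_cases h : d.fst = v <;> simp [h]
  rw [Finset.sum_congr rfl fun v _ => this v, Finset.sum_ite_eq univ d.fst (fun v => g v * x d)]
  simp

lemma sum_symm (f : T.Dart → ℝ) : ∑ d : T.Dart, f d.symm = ∑ d : T.Dart, f d :=
  Equiv.sum_comp (Function.Involutive.toPerm _ Dart.symm_involutive) f

/-- the master quadratic form identity -/
lemma qf_eq (x : T.Dart → ℝ) :
    dotProduct x ((stMat T).mulVec x)
      = (∑ v, (svx x v)^2) - (∑ d : T.Dart, (x d)^2) + ∑ d : T.Dart, x d * x d.symm := by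
  rw [dotProduct]
  rw [Finset.sum_congr rfl fun d _ => by rw [stMat_mulVec x d]]
  have expand : ∀ d : T.Dart, x d * (svx x d.fst - x d + x d.symm)
      = svx x d.fst * x d - (x d)^2 + x d * x d.symm := by intro d; ring
  have h3 : ∑ v, (svx x v)^2 = ∑ d : T.Dart, svx x d.fst * x d := by
    rw [← sum_mul_svx (fun v => svx x v) x]
    exact Finset.sum_congr rfl fun v _ => by rw [sq]
  rw [Finset.sum_congr rfl fun d _ => expand d, Finset.sum_add_distrib, Finset.sum_sub_distrib,
    ← h3]

lemma sum_mul_symm_le (x : T.Dart → ℝ) :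
    ∑ d : T.Dart, x d * x d.symm ≤ ∑ d : T.Dart, (x d)^2 := by
  have h0 : 0 ≤ ∑ d : T.Dart, (x d - x d.symm)^2 :=
    Finset.sum_nonneg fun d _ => sq_nonneg _
  have hexp : ∑ d : T.Dart, (x d - x d.symm)^2
      = (∑ d : T.Dart, (x d)^2) - 2 * ∑ d : T.Dart, x d * x d.symm
        + ∑ d : T.Dart, (x d.symm)^2 := by
    have hp : ∀ d : T.Dart, (x d - x d.symm)^2
        = x d^2 - 2*(x d * x d.symm) + (x d.symm)^2 := fun d => by ring
    rw [Finset.sum_congr rfl fun d _ => hp d, Finset.sum_add_distrib, Finset.sum_sub_distrib,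
      ← Finset.mul_sum]
  have hsy : ∑ d : T.Dart, (x d.symm)^2 = ∑ d : T.Dart, (x d)^2 :=
    sum_symm (fun d => (x d)^2)
  rw [hsy] at hexp
  linarith

lemma neg_sum_le_sum_mul_symm (x : T.Dart → ℝ) :
    - ∑ d : T.Dart, (x d)^2 ≤ ∑ d : T.Dart, x d * x d.symm := by
  have h0 : 0 ≤ ∑ d : T.Dart, (x d + x d.symm)^2 :=
    Finset.sum_nonneg fun d _ => sq_nonneg _
  have hexp : ∑ d : T.Dart, (x d + x d.symm)^2
      = (∑ d : T.Dart, (x d)^2) + 2 * ∑ d : T.Dart, x d * x d.symm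
        + ∑ d : T.Dart, (x d.symm)^2 := by
    have hp : ∀ d : T.Dart, (x d + x d.symm)^2
        = x d^2 + 2*(x d * x d.symm) + (x d.symm)^2 := fun d => by ring
    rw [Finset.sum_congr rfl fun d _ => hp d, Finset.sum_add_distrib, Finset.sum_add_distrib,
      ← Finset.mul_sum]
  have hsy : ∑ d : T.Dart, (x d.symm)^2 = ∑ d : T.Dart, (x d)^2 :=
    sum_symm (fun d => (x d)^2)
  rw [hsy] at hexp
  linarith


section WithTree

variable (hT : T.IsTree) (r : Fin n)

/-- the dart from `v` to its parent -/
noncomputable def pd {v : Fin n} (hv : v ≠ r) : T.Dart := ⟨(v, par hT r v), adj_par hT r hv⟩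

@[simp] lemma pd_fst {v : Fin n} (hv : v ≠ r) : (pd hT r hv).fst = v := rfl
@[simp] lemma pd_snd {v : Fin n} (hv : v ≠ r) : (pd hT r hv).snd = par hT r v := rfl

/-- the linear map defining the "up-dart" subspace W -/
noncomputable def chi : ({v : Fin n // v ≠ r} → ℝ) →ₗ[ℝ] EuclideanSpace ℝ T.Dart where
  toFun y := WithLp.toLp 2 (fun d => if h : d.fst ≠ r ∧ d.snd = par hT r d.fst then y ⟨d.fst, h.1⟩ else 0 :
    T.Dart → ℝ)
  map_add' y z := by
    ext d
    by_cases h : d.fst ≠ r ∧ d.snd = par hT r d.fst <;> simp [h]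
  map_smul' c y := by
    ext d
    by_cases h : d.fst ≠ r ∧ d.snd = par hT r d.fst <;> simp [h]

lemma chi_apply (y : {v : Fin n // v ≠ r} → ℝ) (d : T.Dart) :
    chi hT r y d = if h : d.fst ≠ r ∧ d.snd = par hT r d.fst then y ⟨d.fst, h.1⟩ else 0 := rfl

lemma chi_pd (y : {v : Fin n // v ≠ r} → ℝ) {v : Fin n} (hv : v ≠ r) :
    chi hT r y (pd hT r hv) = y ⟨v, hv⟩ := by
  rw [chi_apply, dif_pos ⟨hv, rfl⟩]
  rfl

lemma chi_eq_zero (y : {v : Fin n // v ≠ r} → ℝ) {d : T.Dart}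
    (hd : ¬ (d.fst ≠ r ∧ d.snd = par hT r d.fst)) : chi hT r y d = 0 := by
  rw [chi_apply, dif_neg hd]

/-- darts in the support of `chi` are parent darts -/
lemma eq_pd {d : T.Dart} (h : d.fst ≠ r ∧ d.snd = par hT r d.fst) : d = pd hT r h.1 := by
  apply SimpleGraph.Dart.ext
  exact Prod.ext rfl h.2

lemma chi_injective : Function.Injective (chi hT r) := by
  intro y z h
  funext v
  have h2 := congrFun (congrArg WithLp.ofLp h) (pd hT r v.2)
  rw [chi_pd hT r y v.2, chi_pd hT r z v.2] at h2
  simpa using h2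

/-- the symm of a parent dart is not in the support of chi -/
lemma chi_symm_pd (y : {v : Fin n // v ≠ r} → ℝ) {d : T.Dart}
    (h : d.fst ≠ r ∧ d.snd = par hT r d.fst) : chi hT r y d.symm = 0 := by
  apply chi_eq_zero
  rintro ⟨h1, h2⟩
  -- d.symm.fst = d.snd = par (d.fst), d.symm.snd = d.fst
  have hfst : d.symm.fst = par hT r d.fst := h.2
  have hsnd : d.symm.snd = d.fst := rfl
  rw [hfst] at h1 h2
  rw [hsnd] at h2
  -- h1 : par (d.fst) ≠ r, h2 : d.fst = par (par (d.fst))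
  have e1 : depth hT r (par hT r d.fst) + 1 = depth hT r d.fst := depth_par hT r h.1
  have e2 : depth hT r (par hT r (par hT r d.fst)) + 1 = depth hT r (par hT r d.fst) :=
    depth_par hT r h1
  rw [← h2] at e2
  omega

/-- sv of chi -/
lemma svx_chi (y : {v : Fin n // v ≠ r} → ℝ) (v : Fin n) :
    svx (chi hT r y) v = if h : v ≠ r then y ⟨v, h⟩ else 0 := by
  by_cases hv : v ≠ r
  · rw [dif_pos hv, svx]
    rw [Finset.sum_eq_single_of_mem (pd hT r hv) (Finset.mem_univ _)]
    · rw [if_pos (pd_fst hT r hv), chi_pd]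
    · intro b _ hb
      by_cases hbf : b.fst = v
      · rw [if_pos hbf]
        apply chi_eq_zero
        rintro ⟨h1, h2⟩
        exact hb (by rw [eq_pd hT r ⟨h1, h2⟩]; congr)
      · rw [if_neg hbf]
  · rw [dif_neg hv]
    push_neg at hv
    apply Finset.sum_eq_zero
    intro d _
    by_cases hdf : d.fst = v
    · rw [if_pos hdf]
      apply chi_eq_zero
      rintro ⟨h1, _⟩
      exact h1 (hdf.trans hv)
    · rw [if_neg hdf]

end WithTree

section Dim

lemma exists_dart_edge {e : Sym2 (Fin n)} (he : e ∈ T.edgeSet) : ∃ d : T.Dart, d.edge = e := by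
  induction e using Sym2.ind with
  | _ a b => exact ⟨⟨(a, b), (SimpleGraph.mem_edgeSet T).mp he⟩, rfl⟩

lemma exists_ne_root (hn : 2 ≤ n) (r : Fin n) : ∃ w : Fin n, w ≠ r := by
  by_cases h0 : (⟨0, by omega⟩ : Fin n) = r
  · refine ⟨⟨1, by omega⟩, ?_⟩
    rw [← h0]
    simp [Fin.ext_iff]
  · exact ⟨⟨0, by omega⟩, h0⟩

lemma exists_dart_fst (hT : T.IsTree) (r : Fin n) (hn : 2 ≤ n) :
    ∀ v : Fin n, ∃ d : T.Dart, d.fst = v := by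
  intro v
  by_cases hv : v ≠ r
  · exact ⟨pd hT r hv, rfl⟩
  · push_neg at hv
    subst hv
    obtain ⟨w, hw⟩ := exists_ne_root hn v
    obtain ⟨u, hu, hmin⟩ := Finset.exists_min_image (univ.filter fun z => z ≠ v)
      (fun z => depth hT v z) ⟨w, by simp [hw]⟩
    have hu' : u ≠ v := by simpa using (Finset.mem_filter.mp hu).2
    have hpar : par hT v u = v := by
      by_contra hp
      have h1 := hmin (par hT v u) (by simp [hp])
      have h2 := depth_par hT v hu'
      omega
    exact ⟨(pd hT v hu').symm, hpar⟩

lemma degree_pos (hT : T.IsTree) (hn : 2 ≤ n) : ∀ v : Fin n, 0 < T.degree v := by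
  intro v
  obtain ⟨d, hd⟩ := exists_dart_fst hT ⟨0, by omega⟩ hn v
  rw [SimpleGraph.degree_pos_iff_exists_adj]
  exact ⟨d.snd, hd ▸ d.adj⟩

lemma card_edges (hT : T.IsTree) : T.edgeFinset.card = n - 1 := by
  have h := hT.card_edgeFinset
  simp only [Fintype.card_fin] at h
  omega

lemma card_darts (hT : T.IsTree) : Fintype.card T.Dart = 2 * (n - 1) := by
  rw [SimpleGraph.dart_card_eq_twice_card_edges, card_edges hT]

lemma card_internal (hT : T.IsTree) (hn : 2 ≤ n) :
    (univ.filter fun v : Fin n => 2 ≤ T.degree v).card ≤ n - 2 := by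
  have hsum : ∑ v, T.degree v = 2 * (n - 1) := by
    rw [SimpleGraph.sum_degrees_eq_twice_card_edges, card_edges hT]
  have hsplit := Finset.sum_filter_add_sum_filter_not univ
    (fun v : Fin n => 2 ≤ T.degree v) (fun v => T.degree v)
  have h1 := Finset.card_nsmul_le_sum (univ.filter fun v : Fin n => 2 ≤ T.degree v)
    (fun v => T.degree v) 2 (fun v hv => (Finset.mem_filter.mp hv).2)
  have h2 := Finset.card_nsmul_le_sum (univ.filter fun v : Fin n => ¬ 2 ≤ T.degree v)
    (fun v => T.degree v) 1 (fun v _ => degree_pos hT hn v)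
  have h3 := Finset.card_filter_add_card_filter_not
    (s := (univ : Finset (Fin n))) (p := fun v : Fin n => 2 ≤ T.degree v)
  simp only [smul_eq_mul, Finset.card_univ, Fintype.card_fin] at h1 h2 h3
  omega

end Dim

section Maps

/-- symmetric (edge-function) subspace map -/
noncomputable def psi (T : SimpleGraph (Fin n)) :
    (↥T.edgeFinset → ℝ) →ₗ[ℝ] EuclideanSpace ℝ T.Dart where
  toFun g := WithLp.toLp 2 (fun d => g ⟨d.edge, SimpleGraph.mem_edgeFinset.mpr d.edge_mem⟩ : T.Dart → ℝ)
  map_add' g h := rfl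
  map_smul' c g := rfl

lemma psi_apply (g : ↥T.edgeFinset → ℝ) (d : T.Dart) :
    psi T g d = g ⟨d.edge, SimpleGraph.mem_edgeFinset.mpr d.edge_mem⟩ := rfl

lemma psi_symm (g : ↥T.edgeFinset → ℝ) (d : T.Dart) : psi T g d.symm = psi T g d := by
  rw [psi_apply, psi_apply]
  congr 1
  exact Subtype.ext (SimpleGraph.Dart.edge_symm d)

lemma psi_injective : Function.Injective (psi T) := by
  intro g h hgh
  funext e
  obtain ⟨d, hd⟩ := exists_dart_edge (T := T) (SimpleGraph.mem_edgeFinset.mp e.2)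
  have h2 := congrFun (congrArg WithLp.ofLp hgh) d
  rw [psi_apply, psi_apply] at h2
  have he : (⟨d.edge, SimpleGraph.mem_edgeFinset.mpr d.edge_mem⟩ : ↥T.edgeFinset) = e :=
    Subtype.ext hd
  rwa [he] at h2

/-- vertex-function subspace map (x d = g d.fst) -/
noncomputable def gam (T : SimpleGraph (Fin n)) :
    (Fin n → ℝ) →ₗ[ℝ] EuclideanSpace ℝ T.Dart where
  toFun g := WithLp.toLp 2 (fun d => g d.fst : T.Dart → ℝ)
  map_add' g h := rfl
  map_smul' c g := rfl

lemma gam_apply (g : Fin n → ℝ) (d : T.Dart) : gam T g d = g d.fst := rfl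

lemma gam_injective (hT : T.IsTree) (hn : 2 ≤ n) : Function.Injective (gam T) := by
  intro g h hgh
  funext v
  obtain ⟨d, hd⟩ := exists_dart_fst hT ⟨0, by omega⟩ hn v
  have h2 := congrFun (congrArg WithLp.ofLp hgh) d
  rw [gam_apply, gam_apply, hd] at h2
  exact h2

/-- sv functional on internal vertices -/
noncomputable def phi (T : SimpleGraph (Fin n)) :
    EuclideanSpace ℝ T.Dart →ₗ[ℝ] ({v : Fin n // 2 ≤ T.degree v} → ℝ) where
  toFun x := fun v => svx x v.1
  map_add' x y := by
    funext v
    exact svx_add x y v.1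
  map_smul' c x := by
    funext v
    exact svx_smul c x v.1

/-- edge functional of the image -/
noncomputable def bphi (T : SimpleGraph (Fin n)) :
    EuclideanSpace ℝ T.Dart →ₗ[ℝ] (↥T.edgeFinset → ℝ) where
  toFun x := fun e => ∑ d : T.Dart, if d.edge = e.1 then (stMat T).mulVec x d else 0
  map_add' x y := by
    funext e
    have hmv : (stMat T).mulVec (x + y) = (stMat T).mulVec x + (stMat T).mulVec y :=
      Matrix.mulVec_add _ _ _
    show (∑ d : T.Dart, if d.edge = e.1 then (stMat T).mulVec (x + y) d else 0)
        = (∑ d : T.Dart, if d.edge = e.1 then (stMat T).mulVec x d else 0)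
          + ∑ d : T.Dart, if d.edge = e.1 then (stMat T).mulVec y d else 0
    rw [hmv, ← Finset.sum_add_distrib]
    refine Finset.sum_congr rfl fun d _ => ?_
    by_cases h : d.edge = e.1 <;> simp [h]
  map_smul' c x := by
    funext e
    have hmv : (stMat T).mulVec (c • x) = c • (stMat T).mulVec x := by
      exact Matrix.mulVec_smul _ _ _
    show (∑ d : T.Dart, if d.edge = e.1 then (stMat T).mulVec (c • x) d else 0)
        = c • ∑ d : T.Dart, if d.edge = e.1 then (stMat T).mulVec x d else 0
    rw [hmv, Finset.smul_sum]
    refine Finset.sum_congr rfl fun d _ => ?_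
    by_cases h : d.edge = e.1 <;> simp [h]

end Maps

section Submods

noncomputable def subU : Submodule ℝ (EuclideanSpace ℝ T.Dart) := LinearMap.range (psi T)
noncomputable def subW (hT : T.IsTree) (r : Fin n) : Submodule ℝ (EuclideanSpace ℝ T.Dart) := LinearMap.range (chi hT r)
noncomputable def subW2 : Submodule ℝ (EuclideanSpace ℝ T.Dart) := LinearMap.range (gam T)
noncomputable def subW1 : Submodule ℝ (EuclideanSpace ℝ T.Dart) := LinearMap.ker (phi T)
noncomputable def subX : Submodule ℝ (EuclideanSpace ℝ T.Dart) := LinearMap.ker (bphi T)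

lemma finrank_subU (hT : T.IsTree) : finrank ℝ (subU (T := T)) = n - 1 := by
  rw [subU, LinearMap.finrank_range_of_inj psi_injective,
    Module.finrank_fintype_fun_eq_card, Fintype.card_coe, card_edges hT]

lemma finrank_subW (hT : T.IsTree) (r : Fin n) : finrank ℝ (subW hT r) = n - 1 := by
  rw [subW, LinearMap.finrank_range_of_inj (chi_injective hT r),
    Module.finrank_fintype_fun_eq_card]
  rw [Fintype.card_subtype_compl, Fintype.card_fin, Fintype.card_subtype_eq]

lemma finrank_subW2 (hT : T.IsTree) (hn : 2 ≤ n) : finrank ℝ (subW2 (T := T)) = n := by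
  rw [subW2, LinearMap.finrank_range_of_inj (gam_injective hT hn),
    Module.finrank_fintype_fun_eq_card, Fintype.card_fin]

lemma finrank_subW1 (hT : T.IsTree) (hn : 2 ≤ n) : n ≤ finrank ℝ (subW1 (T := T)) := by
  have h1 := LinearMap.finrank_range_add_finrank_ker (phi T)
  rw [finrank_euclideanSpace, card_darts hT] at h1
  have h2 : finrank ℝ (LinearMap.range (phi T))
      ≤ finrank ℝ ({v : Fin n // 2 ≤ T.degree v} → ℝ) := Submodule.finrank_le _
  rw [Module.finrank_fintype_fun_eq_card, Fintype.card_subtype] at h2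
  have h3 := card_internal hT hn
  rw [subW1]
  omega

lemma finrank_subX (hT : T.IsTree) : n - 1 ≤ finrank ℝ (subX (T := T)) := by
  have h1 := LinearMap.finrank_range_add_finrank_ker (bphi T)
  rw [finrank_euclideanSpace, card_darts hT] at h1
  have h2 : finrank ℝ (LinearMap.range (bphi T))
      ≤ finrank ℝ (↥T.edgeFinset → ℝ) := Submodule.finrank_le _
  rw [Module.finrank_fintype_fun_eq_card, Fintype.card_coe, card_edges hT] at h2
  rw [subX]
  omega

end Submods

section Quad

lemma dot_sq (x : T.Dart → ℝ) :
    dotProduct x x = ∑ d : T.Dart, (x d)^2 :=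
  Finset.sum_congr rfl fun d _ => (sq (x d)).symm

lemma stMat_symm : (stMat T)ᵀ = stMat T := by
  ext d e
  rw [Matrix.transpose_apply]
  show (if (stellated T).Adj e d then (1:ℝ) else 0) = if (stellated T).Adj d e then 1 else 0
  by_cases h : (stellated T).Adj d e
  · rw [if_pos h, if_pos ((stellated T).adj_comm d e |>.mp h)]
  · rw [if_neg h, if_neg (fun h' => h ((stellated T).adj_comm e d |>.mp h'))]

lemma dot_mulVec_comm (x y : T.Dart → ℝ) :
    dotProduct x ((stMat T).mulVec y) = dotProduct y ((stMat T).mulVec x) := by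
  rw [Matrix.dotProduct_mulVec, ← Matrix.mulVec_transpose, stMat_symm, dotProduct_comm]

/-- quadratic form on symmetric vectors -/
lemma qf_symm (x : T.Dart → ℝ) (hsymm : ∀ d : T.Dart, x d.symm = x d) :
    dotProduct x ((stMat T).mulVec x) = ∑ v, (svx x v)^2 := by
  rw [qf_eq]
  have h1 : ∑ d : T.Dart, x d * x d.symm = ∑ d : T.Dart, (x d)^2 :=
    Finset.sum_congr rfl fun d _ => by rw [hsymm d, sq]
  rw [h1]
  ring

/-- tree argument A : a symmetric vector with all vertex sums zero is zero -/
lemma symm_sv_zero (hT : T.IsTree) (r : Fin n) {x : T.Dart → ℝ}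
    (hsymm : ∀ d : T.Dart, x d.symm = x d) (hsv : ∀ v, svx x v = 0) :
    ∀ d : T.Dart, x d = 0 := by
  by_contra hc
  push_neg at hc
  obtain ⟨d₀, hd₀⟩ := hc
  obtain ⟨d₁, hd₁S, hmax⟩ := Finset.exists_max_image
    (univ.filter fun d : T.Dart => x d ≠ 0) (fun d => depth hT r d.fst)
    ⟨d₀, by simp [hd₀]⟩
  have hx₁ : x d₁ ≠ 0 := by simpa using (Finset.mem_filter.mp hd₁S).2
  have hclaim : ∀ e : T.Dart, e.fst = d₁.fst → x e ≠ 0 →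
      e.fst ≠ r ∧ e.snd = par hT r e.fst := by
    intro e hef hex
    by_cases hsnd : e.snd = par hT r e.fst
    · refine ⟨?_, hsnd⟩
      intro hr
      rw [hr, par_self] at hsnd
      exact SimpleGraph.Dart.fst_ne_snd e (hr.trans hsnd.symm)
    · exfalso
      obtain ⟨-, hdep⟩ := par_of_adj hT r e.adj hsnd
      have hxs : x e.symm ≠ 0 := by rw [hsymm]; exact hex
      have hle : depth hT r e.snd ≤ depth hT r d₁.fst :=
        hmax e.symm (by simp [hxs])
      rw [hdep, hef] at hle
      omega
  obtain ⟨hvr, hsnd1⟩ := hclaim d₁ rfl hx₁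
  have hsv' : svx x d₁.fst = x d₁ := by
    rw [svx, Finset.sum_eq_single_of_mem d₁ (Finset.mem_univ _)]
    · rw [if_pos rfl]
    · intro b _ hb
      by_cases hbf : b.fst = d₁.fst
      · rw [if_pos hbf]
        by_contra hxb
        obtain ⟨hbr, hbsnd⟩ := hclaim b hbf hxb
        apply hb
        apply SimpleGraph.Dart.ext
        apply Prod.ext
        · exact hbf
        · show b.snd = d₁.snd
          rw [hbsnd, hsnd1, hbf]
      · rw [if_neg hbf]
  rw [hsv d₁.fst] at hsv'
  exact hx₁ hsv'.symm

lemma qU_pos (hT : T.IsTree) (r : Fin n) :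
    ∀ x ∈ subU (T := T), x ≠ 0 →
      0 < dotProduct (x : EuclideanSpace ℝ T.Dart) ((stMat T).mulVec x) := by
  rintro x ⟨g, rfl⟩ hx0
  rw [qf_symm _ (psi_symm g)]
  rcases (Finset.sum_nonneg (fun v (_ : v ∈ univ) => sq_nonneg (svx (psi T g) v))).lt_or_eq
    with h | h
  · exact h
  · exfalso
    apply hx0
    have hsv : ∀ v, svx (psi T g) v = 0 := by
      intro v
      have := (Finset.sum_eq_zero_iff_of_nonneg
        (fun v (_ : v ∈ univ) => sq_nonneg (svx (psi T g) v))).mp h.symm v (Finset.mem_univ v)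
      exact pow_eq_zero_iff (two_ne_zero) |>.mp this
    ext d
    exact symm_sv_zero hT r (psi_symm g) hsv d

end Quad

section Quad2

lemma sv_sq_le (hx : ∀ v : Fin n, 2 ≤ T.degree v → svx x v = 0) :
    ∑ v, (svx x v)^2 ≤ ∑ d : T.Dart, (x d)^2 := by
  have hfib : ∑ v, (∑ d : T.Dart, if d.fst = v then (x d)^2 else 0) = ∑ d : T.Dart, (x d)^2 := by
    rw [Finset.sum_comm]
    refine Finset.sum_congr rfl fun d _ => ?_
    rw [Finset.sum_ite_eq univ d.fst (fun _ => (x d)^2)]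
    simp
  rw [← hfib]
  refine Finset.sum_le_sum fun v _ => ?_
  by_cases hv : 2 ≤ T.degree v
  · rw [hx v hv]
    simpa using Finset.sum_nonneg fun d (_ : d ∈ univ) => by positivity
  · have hcard : (univ.filter fun d : T.Dart => d.fst = v).card ≤ 1 := by
      rw [SimpleGraph.dart_fst_fiber_card_eq_degree]
      omega
    have e1 : svx x v = ∑ d ∈ univ.filter (fun d : T.Dart => d.fst = v), x d := by
      rw [Finset.sum_filter, svx]
    have e2 : (∑ d : T.Dart, if d.fst = v then (x d)^2 else 0)
        = ∑ d ∈ univ.filter (fun d : T.Dart => d.fst = v), (x d)^2 := by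
      rw [Finset.sum_filter]
    rw [e1, e2]
    rcases Finset.eq_empty_or_nonempty (univ.filter fun d : T.Dart => d.fst = v) with he | he
    · simp [he]
    · have : (univ.filter fun d : T.Dart => d.fst = v).card = 1 :=
        le_antisymm hcard (Finset.card_pos.mpr he)
      obtain ⟨a, ha⟩ := Finset.card_eq_one.mp this
      simp [ha, le_refl]

lemma qW1_le (x : T.Dart → ℝ) (hx : ∀ v : Fin n, 2 ≤ T.degree v → svx x v = 0) :
    dotProduct x ((stMat T).mulVec x) ≤ dotProduct x x := by
  rw [qf_eq, dot_sq]
  have h1 := sum_mul_symm_le x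
  have h2 := sv_sq_le (x := x) hx
  linarith

lemma svx_comp_fst (h : Fin n → ℝ) (v : Fin n) :
    svx (fun d : T.Dart => h d.fst) v = (T.degree v : ℝ) * h v := by
  rw [svx]
  have e1 : ∀ d : T.Dart, (if d.fst = v then h d.fst else 0) = if d.fst = v then h v else 0 := by
    intro d
    by_cases hd : d.fst = v <;> simp [hd]
  rw [Finset.sum_congr rfl fun d _ => e1 d, ← Finset.sum_filter, Finset.sum_const,
    SimpleGraph.dart_fst_fiber_card_eq_degree, nsmul_eq_mul]

lemma sum_comp_fst (h : Fin n → ℝ) :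
    ∑ d : T.Dart, h d.fst = ∑ v, (T.degree v : ℝ) * h v := by
  have := sum_mul_svx (T := T) (fun _ => (1:ℝ)) (fun d => h d.fst)
  simp only [one_mul] at this
  rw [← this]
  exact Finset.sum_congr rfl fun v _ => by rw [svx_comp_fst]

lemma qW2_ge (hT : T.IsTree) (hn : 2 ≤ n) (g : Fin n → ℝ) :
    - dotProduct (gam T g : EuclideanSpace ℝ T.Dart) (gam T g)
      ≤ dotProduct (gam T g : EuclideanSpace ℝ T.Dart) ((stMat T).mulVec (gam T g)) := by
  have hgam : ∀ d : T.Dart, gam T g d = g d.fst := fun d => rfl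
  rw [qf_eq, dot_sq]
  have h1 := neg_sum_le_sum_mul_symm (x := (gam T g : T.Dart → ℝ))
  have hsv : ∀ v, svx (gam T g) v = (T.degree v : ℝ) * g v := fun v => svx_comp_fst g v
  have hsq : ∑ d : T.Dart, ((gam T g : T.Dart → ℝ) d)^2 = ∑ v, (T.degree v : ℝ) * (g v)^2 := by
    rw [show (fun d : T.Dart => ((gam T g : T.Dart → ℝ) d)^2)
      = fun d : T.Dart => (fun w => (g w)^2) d.fst from rfl]
    exact sum_comp_fst (fun w => (g w)^2)
  have h2 : ∑ v, (T.degree v : ℝ) * (g v)^2 ≤ ∑ v, (svx (gam T g) v)^2 := by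
    refine Finset.sum_le_sum fun v _ => ?_
    rw [hsv v]
    have hdeg : (1 : ℝ) ≤ (T.degree v : ℝ) := by
      have := degree_pos hT hn v
      exact_mod_cast this
    nlinarith [sq_nonneg (g v)]
  rw [hsq] at h1
  linarith

end Quad2

section QuadW

variable (hT : T.IsTree) (r : Fin n)

lemma Mchi_supp (y : {v : Fin n // v ≠ r} → ℝ) (d : T.Dart)
    (h : d.fst ≠ r ∧ d.snd = par hT r d.fst) :
    (stMat T).mulVec (chi hT r y) d = 0 := by
  rw [stMat_mulVec]
  have h1 : chi hT r y d = y ⟨d.fst, h.1⟩ := by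
    rw [chi_apply, dif_pos h]
  have h2 : chi hT r y d.symm = 0 := chi_symm_pd hT r y h
  have h3 : svx (chi hT r y) d.fst = y ⟨d.fst, h.1⟩ := by
    rw [svx_chi, dif_pos h.1]
  rw [h1, h2, h3]
  ring

lemma qW_zero (y y' : {v : Fin n // v ≠ r} → ℝ) :
    dotProduct (chi hT r y : EuclideanSpace ℝ T.Dart)
      ((stMat T).mulVec (chi hT r y')) = 0 := by
  apply Finset.sum_eq_zero
  intro d _
  by_cases hd : d.fst ≠ r ∧ d.snd = par hT r d.fst
  · rw [Mchi_supp hT r y' d hd, mul_zero]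
  · rw [chi_eq_zero hT r y hd, zero_mul]

lemma UW_disj : ∀ x, x ∈ subU (T := T) → x ∈ subW hT r → x = 0 := by
  intro x hU hW
  obtain ⟨g, hg⟩ := hU
  obtain ⟨y, hy⟩ := hW
  ext d
  by_cases hd : d.fst ≠ r ∧ d.snd = par hT r d.fst
  · have h1 : x d = x d.symm := by rw [← hg]; exact (psi_symm g d).symm
    have h2 : x d.symm = 0 := by rw [← hy]; exact chi_symm_pd hT r y hd
    rw [h1, h2]
    rfl
  · have := chi_eq_zero hT r y hd
    rw [← hy]
    exact this

lemma sum_edge_pair (f : T.Dart → ℝ) (d₀ : T.Dart) :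
    (∑ d : T.Dart, if d.edge = d₀.edge then f d else 0) = f d₀ + f d₀.symm := by
  rw [← Finset.sum_filter]
  have hset : univ.filter (fun d : T.Dart => d.edge = d₀.edge) = {d₀, d₀.symm} := by
    ext d
    simp [SimpleGraph.dart_edge_eq_iff]
  rw [hset, Finset.sum_pair (SimpleGraph.Dart.symm_ne d₀).symm]

lemma WX_disj : ∀ x, x ∈ subW hT r → x ∈ subX (T := T) → x = 0 := by
  intro x hW hX
  obtain ⟨y, hy⟩ := hW
  have hbx : bphi T x = 0 := LinearMap.mem_ker.mp hX
  -- the linear condition at each non-root vertex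
  have hcond : ∀ (v : Fin n) (hv : v ≠ r),
      y ⟨v, hv⟩ + (if h : par hT r v ≠ r then y ⟨par hT r v, h⟩ else 0) = 0 := by
    intro v hv
    have he := congrFun hbx ⟨(pd hT r hv).edge,
      SimpleGraph.mem_edgeFinset.mpr (pd hT r hv).edge_mem⟩
    have hsum : (∑ d : T.Dart, if d.edge = (pd hT r hv).edge
        then (stMat T).mulVec x d else 0) = 0 := he
    rw [sum_edge_pair ((stMat T).mulVec x) (pd hT r hv)] at hsum
    rw [← hy] at hsum
    rw [stMat_mulVec, stMat_mulVec] at hsum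
    have e1 : (pd hT r hv).symm.symm = pd hT r hv := SimpleGraph.Dart.symm_symm _
    rw [e1] at hsum
    have e2 : (pd hT r hv).symm.fst = par hT r v := rfl
    rw [e2] at hsum
    have e3 : svx (chi hT r y) v = y ⟨v, hv⟩ := by rw [svx_chi, dif_pos hv]
    have e4 : svx (chi hT r y) (par hT r v)
        = if h : par hT r v ≠ r then y ⟨par hT r v, h⟩ else 0 := svx_chi hT r y _
    rw [show (pd hT r hv).fst = v from rfl] at hsum
    rw [e3, e4] at hsum
    linarith [hsum]
  -- minimality argument: y = 0
  have hy0 : y = 0 := by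
    by_contra hyne
    have hex : ∃ w : {v : Fin n // v ≠ r}, y w ≠ 0 := by
      by_contra hno
      push_neg at hno
      exact hyne (funext fun w => hno w)
    obtain ⟨w₀, hw₀⟩ := hex
    obtain ⟨u, huS, hmin⟩ := Finset.exists_min_image
      (univ.filter fun w : {v : Fin n // v ≠ r} => y w ≠ 0)
      (fun w => depth hT r w.1) ⟨w₀, by simp [hw₀]⟩
    have hyu : y u ≠ 0 := by simpa using (Finset.mem_filter.mp huS).2
    have hc := hcond u.1 u.2
    rw [show (⟨u.1, u.2⟩ : {v : Fin n // v ≠ r}) = u from rfl] at hc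
    by_cases hpr : par hT r u.1 ≠ r
    · rw [dif_pos hpr] at hc
      have hdep := depth_par hT r u.2
      have hnotin : y ⟨par hT r u.1, hpr⟩ = 0 := by
        by_contra hyp
        have h5 : depth hT r u.1 ≤ depth hT r (par hT r u.1) :=
          hmin ⟨par hT r u.1, hpr⟩ (by simp [hyp])
        omega
      rw [hnotin] at hc
      exact hyu (by linarith)
    · rw [dif_neg hpr] at hc
      exact hyu (by linarith)
  rw [← hy, hy0]
  exact map_zero _

end QuadW

section Assemble

lemma sup_UW (hT : T.IsTree) (r : Fin n) (hn : 2 ≤ n) : subU (T := T) ⊔ subW hT r = ⊤ := by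
  have hinf : subU (T := T) ⊓ subW hT r = ⊥ := by
    rw [eq_bot_iff]
    intro x hx
    simp only [Submodule.mem_inf] at hx
    simpa using UW_disj hT r x hx.1 hx.2
  have hsum := Submodule.finrank_sup_add_finrank_inf_eq (subU (T := T)) (subW hT r)
  rw [hinf, finrank_bot, add_zero, finrank_subU hT, finrank_subW hT r] at hsum
  apply Submodule.eq_top_of_finrank_eq
  rw [hsum, finrank_euclideanSpace, card_darts hT]
  omega

lemma dot_psi_mulVec (hT : T.IsTree) (r : Fin n) (g : ↥T.edgeFinset → ℝ)
    (x : EuclideanSpace ℝ T.Dart) (hx : x ∈ subX (T := T)) :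
    dotProduct (psi T g : EuclideanSpace ℝ T.Dart) ((stMat T).mulVec x) = 0 := by
  have hbx : bphi T x = 0 := LinearMap.mem_ker.mp hx
  have key : ∀ d : T.Dart, psi T g d * (stMat T).mulVec x d
      = ∑ e : ↥T.edgeFinset, g e * (if d.edge = e.1 then (stMat T).mulVec x d else 0) := by
    intro d
    rw [Finset.sum_eq_single_of_mem (⟨d.edge, SimpleGraph.mem_edgeFinset.mpr d.edge_mem⟩ :
      ↥T.edgeFinset) (Finset.mem_univ _)]
    · rw [if_pos rfl, psi_apply]
    · intro e _ he
      have : ¬ d.edge = e.1 := by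
        intro hde
        exact he (Subtype.ext hde.symm)
      rw [if_neg this, mul_zero]
  rw [dotProduct]
  rw [Finset.sum_congr rfl fun d _ => key d]
  rw [Finset.sum_comm]
  apply Finset.sum_eq_zero
  intro e _
  rw [← Finset.mul_sum]
  have : (∑ d : T.Dart, if d.edge = e.1 then (stMat T).mulVec x d else 0) = 0 :=
    congrFun hbx e
  rw [this, mul_zero]

lemma qX_neg (hT : T.IsTree) (r : Fin n) (hn : 2 ≤ n) :
    ∀ x ∈ subX (T := T), x ≠ 0 →
      dotProduct (x : EuclideanSpace ℝ T.Dart) ((stMat T).mulVec x) < 0 := by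
  intro x hx hx0
  have hxtop : x ∈ subU (T := T) ⊔ subW hT r := by
    rw [sup_UW hT r hn]
    exact Submodule.mem_top
  obtain ⟨u, hu, w, hw, huw⟩ := Submodule.mem_sup.mp hxtop
  have hMx : (stMat T).mulVec x = (stMat T).mulVec u + (stMat T).mulVec w := by
    rw [← huw]
    exact Matrix.mulVec_add _ _ _
  have h1 : dotProduct (x : EuclideanSpace ℝ T.Dart) ((stMat T).mulVec x)
      = dotProduct (u : EuclideanSpace ℝ T.Dart) ((stMat T).mulVec x)
        + dotProduct (w : EuclideanSpace ℝ T.Dart) ((stMat T).mulVec x) := by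
    rw [← huw]
    exact add_dotProduct _ _ _
  have h2 : dotProduct (u : EuclideanSpace ℝ T.Dart) ((stMat T).mulVec x)
      = dotProduct (u : EuclideanSpace ℝ T.Dart) ((stMat T).mulVec u)
        + dotProduct (u : EuclideanSpace ℝ T.Dart) ((stMat T).mulVec w) := by
    rw [hMx]
    exact dotProduct_add _ _ _
  have h3 : dotProduct (w : EuclideanSpace ℝ T.Dart) ((stMat T).mulVec x)
      = dotProduct (w : EuclideanSpace ℝ T.Dart) ((stMat T).mulVec u)
        + dotProduct (w : EuclideanSpace ℝ T.Dart) ((stMat T).mulVec w) := by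
    rw [hMx]
    exact dotProduct_add _ _ _
  have h4 : dotProduct (w : EuclideanSpace ℝ T.Dart) ((stMat T).mulVec u)
      = dotProduct (u : EuclideanSpace ℝ T.Dart) ((stMat T).mulVec w) :=
    dot_mulVec_comm _ _
  obtain ⟨g, hg⟩ := hu
  obtain ⟨y, hy⟩ := hw
  have h5 : dotProduct (w : EuclideanSpace ℝ T.Dart) ((stMat T).mulVec w) = 0 := by
    rw [← hy]
    exact qW_zero hT r y y
  have h6 : dotProduct (u : EuclideanSpace ℝ T.Dart) ((stMat T).mulVec x) = 0 := by
    rw [← hg]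
    exact dot_psi_mulVec hT r g x hx
  -- q(x) = - q(u)
  have hqu : dotProduct (x : EuclideanSpace ℝ T.Dart) ((stMat T).mulVec x)
      = - dotProduct (u : EuclideanSpace ℝ T.Dart) ((stMat T).mulVec u) := by
    linarith
  rw [hqu]
  rcases eq_or_ne u 0 with hu0 | hu0
  · exfalso
    apply hx0
    apply WX_disj hT r x _ hx
    rw [← huw, hu0, zero_add]
    rw [← hy]
    exact LinearMap.mem_range_self _ y
  · have := qU_pos hT r u ⟨g, hg⟩ hu0
    linarith

end Assemble

end StellAux

open StellAux in
/-- Let `G = st(T)` be the stellated graph of a tree `T` with at least two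
vertices.  Then the median eigenvalues of `G` satisfy
`−1 ≤ λ_L(G) < 0 < λ_H(G) ≤ 1`.  Since the spectrum of `G` (which has `2|E(T)| = 2(n−1)`
vertices) splits about the origin, this says: exactly `n−1` eigenvalues are positive and
`n−1` are negative, the smallest positive one is at most `1`, and the largest negative
one is at least `−1`. -/
theorem stellated_tree_median_eigenvalues
    {n : ℕ} (hn : 2 ≤ n) (T : SimpleGraph (Fin n)) (hT : T.IsTree)
    (A : Matrix T.Dart T.Dart ℝ)
    (hAdef : A = Matrix.of fun d e => if (stellated T).Adj d e then (1 : ℝ) else 0)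
    (hA : A.IsHermitian) :
    Nat.card {d // 0 < hA.eigenvalues d} = n - 1 ∧
    Nat.card {d // hA.eigenvalues d < 0} = n - 1 ∧
    (∃ d, 0 < hA.eigenvalues d ∧ hA.eigenvalues d ≤ 1) ∧
    (∃ d, hA.eigenvalues d < 0 ∧ -1 ≤ hA.eigenvalues d) := by
  have hAst : A = stMat T := hAdef
  subst hAst
  have r : Fin n := ⟨0, by omega⟩
  -- positive count lower bound
  have hp : n - 1 ≤ (Finset.univ.filter fun d => 0 < hA.eigenvalues d).card := by
    have hle := le_card_gt (hA := hA) (c := 0) (subU (T := T)) ?_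
    · rwa [finrank_subU hT] at hle
    · intro x hx hx0
      rw [zero_mul]
      exact qU_pos hT r x hx hx0
  -- negative count lower bound
  have hm : n - 1 ≤ (Finset.univ.filter fun d => hA.eigenvalues d < 0).card := by
    have hle := le_card_lt (hA := hA) (c := 0) (subX (T := T)) ?_
    · exact le_trans (finrank_subX hT) hle
    · intro x hx hx0
      rw [zero_mul]
      exact qX_neg hT r hn x hx hx0
  -- total
  have hdisj : Disjoint (Finset.univ.filter fun d => 0 < hA.eigenvalues d)
      (Finset.univ.filter fun d => hA.eigenvalues d < 0) := by
    rw [Finset.disjoint_left]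
    intro d h1 h2
    have h1' := (Finset.mem_filter.mp h1).2
    have h2' := (Finset.mem_filter.mp h2).2
    linarith
  have htot : (Finset.univ.filter fun d => 0 < hA.eigenvalues d).card
      + (Finset.univ.filter fun d => hA.eigenvalues d < 0).card ≤ 2 * (n - 1) := by
    rw [← Finset.card_union_of_disjoint hdisj, ← card_darts hT]
    exact le_trans (Finset.card_le_univ _) (le_of_eq (Finset.card_univ))
  -- eigenvalues > 1 bound
  have hgt1 : (Finset.univ.filter fun d => 1 < hA.eigenvalues d).card + n ≤ 2 * (n - 1) := by
    have hle := card_gt_add_le (hA := hA) (c := 1) (subW1 (T := T)) ?_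
    · have hfr := finrank_subW1 hT hn
      rw [card_darts hT] at hle
      omega
    · intro x hx
      rw [one_mul]
      apply qW1_le
      intro v hv
      exact congrFun (LinearMap.mem_ker.mp hx) ⟨v, hv⟩
  -- eigenvalues < -1 bound
  have hlt1 : (Finset.univ.filter fun d => hA.eigenvalues d < -1).card + n ≤ 2 * (n - 1) := by
    have hle := card_lt_add_le (hA := hA) (c := -1) (subW2 (T := T)) ?_
    · rw [finrank_subW2 hT hn, card_darts hT] at hle
      exact hle
    · rintro x ⟨g, rfl⟩
      rw [neg_one_mul]
      exact qW2_ge hT hn g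
  have hpcard : (Finset.univ.filter fun d => 0 < hA.eigenvalues d).card = n - 1 := by omega
  have hmcard : (Finset.univ.filter fun d => hA.eigenvalues d < 0).card = n - 1 := by omega
  refine ⟨?_, ?_, ?_, ?_⟩
  · rw [Nat.card_eq_fintype_card, Fintype.card_subtype]
    exact hpcard
  · rw [Nat.card_eq_fintype_card, Fintype.card_subtype]
    exact hmcard
  · by_contra hcon
    push_neg at hcon
    have hsub : (Finset.univ.filter fun d => 0 < hA.eigenvalues d)
        ⊆ (Finset.univ.filter fun d => 1 < hA.eigenvalues d) := by
      intro d hd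
      rw [Finset.mem_filter] at hd ⊢
      exact ⟨hd.1, hcon d hd.2⟩
    have := Finset.card_le_card hsub
    omega
  · by_contra hcon
    push_neg at hcon
    have hsub : (Finset.univ.filter fun d => hA.eigenvalues d < 0)
        ⊆ (Finset.univ.filter fun d => hA.eigenvalues d < -1) := by
      intro d hd
      rw [Finset.mem_filter] at hd ⊢
      exact ⟨hd.1, hcon d hd.2⟩
    have := Finset.card_le_card hsub
    omega
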